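/- arXiv:1603.00294 — 3 statements merged into one kernel-verified Lean document; each statement's English description precedes it below -/
import Mathlib

section
/- (First variational formula for the conjugated ∂̄-operator, Takhtajan–Zograf type.) Let μ̃ : ℍ → ℂ be smooth, and suppose that for every t in a neighborhood of 0 ∈ ℂ there is a smooth diffeomorphism Φ_t : ℍ → ℍ satisfying ∂̄Φ_t = t·μ̃·∂Φ_t with ∂Φ_t(z) ≠ 0 and |t·μ̃(z)| < 1 for all z. Then for every smooth h : ℍ → ℂ and every z ∈ ℍ, the function t ↦ [∂̄(h ∘ Φ_t⁻¹)](Φ_t(z)) · conj(∂Φ_t(z)) equals (1/(1 − |t|²·|μ̃(z)|²)) · (∂̄h(z) − t·μ̃(z)·∂h(z)); in particular its Wirtinger derivative with respect to t at t = 0 equals −μ̃(z)·∂h(z), and its Wirtinger derivative with respect to t̄ at t = 0 equals 0. -/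
open Complex

/-- The open upper half-plane in ℂ. -/
def UHP : Set ℂ := {z : ℂ | 0 < z.im}

/-- The Wirtinger derivative ∂f = (1/2)(∂f/∂x - i·∂f/∂y). -/
noncomputable def wD (f : ℂ → ℂ) (z : ℂ) : ℂ :=
  (1 / 2) * (fderiv ℝ f z 1 - Complex.I * fderiv ℝ f z Complex.I)

/-- The Wirtinger derivative ∂̄f = (1/2)(∂f/∂x + i·∂f/∂y). -/
noncomputable def wDbar (f : ℂ → ℂ) (z : ℂ) : ℂ :=
  (1 / 2) * (fderiv ℝ f z 1 + Complex.I * fderiv ℝ f z Complex.I)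

lemma isOpen_UHP : IsOpen UHP :=
  isOpen_lt continuous_const Complex.continuous_im

lemma diffAt_of_smooth {f : ℂ → ℂ} (hf : ContDiffOn ℝ (⊤ : ℕ∞) f UHP)
    {z : ℂ} (hz : z ∈ UHP) : DifferentiableAt ℝ f z :=
  (hf.contDiffAt (isOpen_UHP.mem_nhds hz)).differentiableAt (by simp)

/-- The "holomorphic part" of an ℝ-linear map `ℂ → ℂ`. -/
noncomputable def pL (L : ℂ →L[ℝ] ℂ) : ℂ := (1 / 2) * (L 1 - Complex.I * L Complex.I)
/-- The "antiholomorphic part" of an ℝ-linear map `ℂ → ℂ`. -/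
noncomputable def qL (L : ℂ →L[ℝ] ℂ) : ℂ := (1 / 2) * (L 1 + Complex.I * L Complex.I)

lemma wD_eq_pL (f : ℂ → ℂ) (z : ℂ) : wD f z = pL (fderiv ℝ f z) := rfl
lemma wDbar_eq_qL (f : ℂ → ℂ) (z : ℂ) : wDbar f z = qL (fderiv ℝ f z) := rfl

lemma apply_eq (L : ℂ →L[ℝ] ℂ) (w : ℂ) :
    L w = pL L * w + qL L * (starRingEnd ℂ) w := by
  have hw : w = w.re • (1 : ℂ) + w.im • Complex.I := by
    simp [Complex.real_smul, Complex.re_add_im]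
  conv_lhs => rw [hw]
  rw [map_add, map_smul, map_smul]
  have hcw : (starRingEnd ℂ) w = (w.re : ℂ) - w.im * Complex.I := by
    simp [Complex.ext_iff]
  rw [hcw]
  nth_rewrite 3 [hw]
  simp only [Complex.real_smul, pL, qL]
  ring_nf
  simp [Complex.I_sq]

lemma pL_comp (L M : ℂ →L[ℝ] ℂ) :
    pL (L.comp M) = pL L * pL M + qL L * (starRingEnd ℂ) (qL M) := by
  have h1 : M 1 = pL M + qL M := by
    have := apply_eq M 1; simpa using this
  have hI : M Complex.I = pL M * Complex.I - qL M * Complex.I := by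
    have := apply_eq M Complex.I
    simpa [Complex.conj_I, mul_comm, sub_eq_add_neg] using this
  have e1 : (L.comp M) 1 = L (M 1) := rfl
  have e2 : (L.comp M) Complex.I = L (M Complex.I) := rfl
  rw [pL, e1, e2, h1, hI, apply_eq L (pL M + qL M),
    apply_eq L (pL M * Complex.I - qL M * Complex.I)]
  simp only [map_add, map_sub, map_mul, Complex.conj_I]
  ring_nf
  simp [Complex.I_sq]
  ring

lemma qL_comp (L M : ℂ →L[ℝ] ℂ) :
    qL (L.comp M) = pL L * qL M + qL L * (starRingEnd ℂ) (pL M) := by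
  have h1 : M 1 = pL M + qL M := by
    have := apply_eq M 1; simpa using this
  have hI : M Complex.I = pL M * Complex.I - qL M * Complex.I := by
    have := apply_eq M Complex.I
    simpa [Complex.conj_I, mul_comm, sub_eq_add_neg] using this
  have e1 : (L.comp M) 1 = L (M 1) := rfl
  have e2 : (L.comp M) Complex.I = L (M Complex.I) := rfl
  rw [qL, e1, e2, h1, hI, apply_eq L (pL M + qL M),
    apply_eq L (pL M * Complex.I - qL M * Complex.I)]
  simp only [map_add, map_sub, map_mul, Complex.conj_I]
  ring_nf
  simp [Complex.I_sq]
  ring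

/-- Wirtinger chain rule. -/
lemma wirtinger_chain (g φ : ℂ → ℂ) (z : ℂ)
    (hg : DifferentiableAt ℝ g (φ z)) (hφ : DifferentiableAt ℝ φ z) :
    wD (fun x => g (φ x)) z
        = wD g (φ z) * wD φ z + wDbar g (φ z) * (starRingEnd ℂ) (wDbar φ z)
      ∧ wDbar (fun x => g (φ x)) z
        = wD g (φ z) * wDbar φ z + wDbar g (φ z) * (starRingEnd ℂ) (wD φ z) := by
  have hc : fderiv ℝ (fun x => g (φ x)) z = (fderiv ℝ g (φ z)).comp (fderiv ℝ φ z) :=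
    fderiv_comp z hg hφ
  constructor
  · rw [wD_eq_pL, hc, pL_comp, ← wD_eq_pL, ← wD_eq_pL, ← wDbar_eq_qL, ← wDbar_eq_qL]
  · rw [wDbar_eq_qL, hc, qL_comp, ← wD_eq_pL, ← wD_eq_pL, ← wDbar_eq_qL, ← wDbar_eq_qL]

/-- The derivative at `0` of the model function. -/
lemma model_hasFDerivAt (c a m : ℂ) :
    HasFDerivAt (fun t : ℂ => (1 - t * (starRingEnd ℂ) t * c)⁻¹ * (a - t * m))
      (-(m • ContinuousLinearMap.id ℝ ℂ)) 0 := by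
  have h1 : HasFDerivAt (fun t : ℂ => t) (ContinuousLinearMap.id ℝ ℂ) 0 := hasFDerivAt_id 0
  have hconj : HasFDerivAt (fun t : ℂ => (starRingEnd ℂ) t)
      (Complex.conjCLE.toContinuousLinearMap) 0 :=
    Complex.conjCLE.toContinuousLinearMap.hasFDerivAt
  have hmul : HasFDerivAt (fun t : ℂ => t * (starRingEnd ℂ) t) (0 : ℂ →L[ℝ] ℂ) 0 := by
    have := h1.mul hconj
    simpa [Pi.mul_def] using this
  have hden : HasFDerivAt (fun t : ℂ => 1 - t * (starRingEnd ℂ) t * c) (0 : ℂ →L[ℝ] ℂ) 0 := by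
    have := (hmul.mul_const c).const_sub 1
    simpa using this
  have hinv : HasFDerivAt (fun t : ℂ => (1 - t * (starRingEnd ℂ) t * c)⁻¹) (0 : ℂ →L[ℝ] ℂ) 0 := by
    have hd : HasDerivAt (fun y : ℂ => y⁻¹) (-1 : ℂ) 1 := by
      simpa using hasDerivAt_inv (one_ne_zero (α := ℂ))
    have hf := hd.hasFDerivAt.restrictScalars ℝ
    have h0 : (1 : ℂ) = 1 - (0 : ℂ) * (starRingEnd ℂ) 0 * c := by simp
    rw [h0] at hf
    have hcomp := HasFDerivAt.comp (0 : ℂ) hf hden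
    have heq : (fun t : ℂ => (1 - t * (starRingEnd ℂ) t * c)⁻¹)
        = (fun y : ℂ => y⁻¹) ∘ fun t : ℂ => 1 - t * (starRingEnd ℂ) t * c := rfl
    rw [heq]
    simpa using hcomp
  have hsub : HasFDerivAt (fun t : ℂ => a - t * m)
      (-(m • ContinuousLinearMap.id ℝ ℂ)) 0 := by
    have := (h1.mul_const m).const_sub a
    convert this using 1
  have := hinv.mul hsub
  simp [Pi.mul_def] at this
  exact this

/-- Takhtajan–Zograf type first variational formula for the conjugated
`∂̄`-operator: for a family `Φ_t` of diffeomorphic solutions of `∂̄Φ_t = t·μ̃·∂Φ_t`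
(with inverses `Ψ_t`), the function
`t ↦ [∂̄(h ∘ Ψ_t)](Φ_t z) · conj(∂Φ_t z)` equals
`(1/(1-|t|²|μ̃ z|²)) · (∂̄h z − t·μ̃ z·∂h z)` on the parameter neighbourhood `U`,
and its Wirtinger `t`- and `t̄`-derivatives at `t = 0` are `−μ̃ z · ∂h z` and `0`. -/
theorem first_variation_conjugated_dbar
    (μt : ℂ → ℂ)
    (hμt_smooth : ContDiffOn ℝ (⊤ : ℕ∞) μt UHP)
    (U : Set ℂ) (hU : U ∈ nhds (0 : ℂ))
    (Φ Ψ : ℂ → ℂ → ℂ)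
    (hΦ_smooth : ∀ t ∈ U, ContDiffOn ℝ (⊤ : ℕ∞) (Φ t) UHP)
    (hΨ_smooth : ∀ t ∈ U, ContDiffOn ℝ (⊤ : ℕ∞) (Ψ t) UHP)
    (hΦ_maps : ∀ t ∈ U, Set.MapsTo (Φ t) UHP UHP)
    (hΨ_maps : ∀ t ∈ U, Set.MapsTo (Ψ t) UHP UHP)
    (hleft : ∀ t ∈ U, ∀ z ∈ UHP, Ψ t (Φ t z) = z)
    (hright : ∀ t ∈ U, ∀ w ∈ UHP, Φ t (Ψ t w) = w)
    (hBeltrami : ∀ t ∈ U, ∀ z ∈ UHP, wDbar (Φ t) z = t * μt z * wD (Φ t) z)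
    (hne : ∀ t ∈ U, ∀ z ∈ UHP, wD (Φ t) z ≠ 0)
    (hlt : ∀ t ∈ U, ∀ z ∈ UHP, ‖t * μt z‖ < 1)
    (h : ℂ → ℂ) (hh_smooth : ContDiffOn ℝ (⊤ : ℕ∞) h UHP) :
    (∀ t ∈ U, ∀ z ∈ UHP,
        wDbar (fun x => h (Ψ t x)) (Φ t z) * (starRingEnd ℂ) (wD (Φ t) z)
          = (1 / (1 - (‖t‖ : ℂ) ^ 2 * (‖μt z‖ : ℂ) ^ 2))
              * (wDbar h z - t * μt z * wD h z))
    ∧ (∀ z ∈ UHP,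
        wD (fun t => wDbar (fun x => h (Ψ t x)) (Φ t z)
              * (starRingEnd ℂ) (wD (Φ t) z)) 0
          = -(μt z) * wD h z
        ∧ wDbar (fun t => wDbar (fun x => h (Ψ t x)) (Φ t z)
              * (starRingEnd ℂ) (wD (Φ t) z)) 0
          = 0) := by
  have key : ∀ t ∈ U, ∀ z ∈ UHP,
      wDbar (fun x => h (Ψ t x)) (Φ t z) * (starRingEnd ℂ) (wD (Φ t) z)
        = (1 / (1 - (‖t‖ : ℂ) ^ 2 * (‖μt z‖ : ℂ) ^ 2))
            * (wDbar h z - t * μt z * wD h z) := by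
    intro t ht z hz
    have hΦz : Φ t z ∈ UHP := hΦ_maps t ht hz
    set g : ℂ → ℂ := fun x => h (Ψ t x) with hg_def
    have hΨd : DifferentiableAt ℝ (Ψ t) (Φ t z) := diffAt_of_smooth (hΨ_smooth t ht) hΦz
    have hgd : DifferentiableAt ℝ g (Φ t z) := by
      have : DifferentiableAt ℝ h (Ψ t (Φ t z)) := by
        rw [hleft t ht z hz]; exact diffAt_of_smooth hh_smooth hz
      exact this.comp (Φ t z) hΨd
    have hΦd : DifferentiableAt ℝ (Φ t) z := diffAt_of_smooth (hΦ_smooth t ht) hz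
    have hev : (fun x => g (Φ t x)) =ᶠ[nhds z] h := by
      filter_upwards [isOpen_UHP.mem_nhds hz] with x hx
      simp only [hg_def, hleft t ht x hx]
    have hchain := wirtinger_chain g (Φ t) z hgd hΦd
    have hwD : wD h z = wD g (Φ t z) * wD (Φ t) z
        + wDbar g (Φ t z) * (starRingEnd ℂ) (wDbar (Φ t) z) := by
      rw [← hchain.1]
      unfold wD
      rw [hev.fderiv_eq]
    have hwDbar : wDbar h z = wD g (Φ t z) * wDbar (Φ t) z
        + wDbar g (Φ t z) * (starRingEnd ℂ) (wD (Φ t) z) := by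
      rw [← hchain.2]
      unfold wDbar
      rw [hev.fderiv_eq]
    set A := wD g (Φ t z)
    set B := wDbar g (Φ t z)
    set α := wD (Φ t) z
    have hβ : wDbar (Φ t) z = t * μt z * α := hBeltrami t ht z hz
    rw [hβ] at hwD hwDbar
    have habs : ((‖t‖ : ℂ) ^ 2 * (‖μt z‖ : ℂ) ^ 2)
        = (t * μt z) * (starRingEnd ℂ) (t * μt z) := by
      rw [Complex.mul_conj, ← Complex.sq_norm, norm_mul, mul_pow]
      push_cast
      ring
    have hr : (‖t * μt z‖) ^ 2 < 1 := by
      have := hlt t ht z hz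
      nlinarith [norm_nonneg (t * μt z)]
    have hDne : (1 : ℂ) - (‖t‖ : ℂ) ^ 2 * (‖μt z‖ : ℂ) ^ 2 ≠ 0 := by
      have h1 : (1 : ℝ) - (‖t * μt z‖) ^ 2 ≠ 0 := by linarith
      have h2 : ((1 - (‖t * μt z‖) ^ 2 : ℝ) : ℂ) ≠ 0 :=
        Complex.ofReal_ne_zero.mpr h1
      have he : (1 : ℂ) - (‖t‖ : ℂ) ^ 2 * (‖μt z‖ : ℂ) ^ 2
          = ((1 - (‖t * μt z‖) ^ 2 : ℝ) : ℂ) := by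
        rw [norm_mul, mul_pow]
        push_cast
        ring
      rwa [he]
    rw [hwDbar, hwD]
    field_simp
    rw [habs]
    simp only [map_mul]
    ring
  refine ⟨key, ?_⟩
  intro z hz
  have hGd := model_hasFDerivAt (μt z * (starRingEnd ℂ) (μt z)) (wDbar h z)
    (μt z * wD h z)
  have hFG : (fun t => wDbar (fun x => h (Ψ t x)) (Φ t z)
        * (starRingEnd ℂ) (wD (Φ t) z))
      =ᶠ[nhds 0] (fun t : ℂ =>
        (1 - t * (starRingEnd ℂ) t * (μt z * (starRingEnd ℂ) (μt z)))⁻¹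
          * (wDbar h z - t * (μt z * wD h z))) := by
    filter_upwards [hU] with t ht
    rw [key t ht z hz]
    have habs2 : ((‖t‖ : ℂ) ^ 2 * (‖μt z‖ : ℂ) ^ 2)
        = t * (starRingEnd ℂ) t * (μt z * (starRingEnd ℂ) (μt z)) := by
      have : ((‖t‖ : ℂ) ^ 2 * (‖μt z‖ : ℂ) ^ 2)
          = (t * μt z) * (starRingEnd ℂ) (t * μt z) := by
        rw [Complex.mul_conj, ← Complex.sq_norm, norm_mul, mul_pow]
        push_cast
        ring
      rw [this, map_mul]
      ring
    rw [one_div, habs2]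
    ring_nf
  have hfd : fderiv ℝ (fun t => wDbar (fun x => h (Ψ t x)) (Φ t z)
        * (starRingEnd ℂ) (wD (Φ t) z)) 0
      = -((μt z * wD h z) • ContinuousLinearMap.id ℝ ℂ) := by
    rw [hFG.fderiv_eq]
    exact hGd.fderiv
  constructor
  · rw [wD, hfd]
    simp only [ContinuousLinearMap.neg_apply, ContinuousLinearMap.smul_apply,
      ContinuousLinearMap.id_apply, smul_eq_mul]
    ring_nf
    simp [Complex.I_sq]
    ring
  · rw [wDbar, hfd]
    simp only [ContinuousLinearMap.neg_apply, ContinuousLinearMap.smul_apply,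
      ContinuousLinearMap.id_apply, smul_eq_mul]
    ring_nf
    simp [Complex.I_sq]
end

section
/- Let λ : ℍ → ℂ be a Beltrami coefficient and let Φ : ℍ → ℍ be a smooth diffeomorphism satisfying ∂̄Φ = λ·∂Φ with ∂Φ(z) ≠ 0 for all z. Let α : ℍ → ℂ be smooth, and let β : ℍ → ℂ denote the function w ↦ α(Φ⁻¹(w)) / conj(∂Φ(Φ⁻¹(w))). Then for every z ∈ ℍ one has [∂β](Φ(z)) · ∂Φ(z) · conj(∂Φ(z)) = (1/(1 − |λ(z)|²)) · (∂α(z) − ∂̄(conj(λ)·α)(z)). (This is the closed form of the conjugated operator (Φ)_* ∂ (Φ)_*⁻¹ on coefficients of (0,1)-forms used in the paper.) -/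
open Complex

lemma wd_decomp (f : ℂ → ℂ) (z v : ℂ) :
    fderiv ℝ f z v = wD f z * v + wDbar f z * (starRingEnd ℂ) v := by
  have hv : v = (v.re : ℝ) • (1 : ℂ) + (v.im : ℝ) • Complex.I := by
    simp [Complex.real_smul, Complex.re_add_im]
  have h1 : fderiv ℝ f z v
      = (v.re : ℝ) • fderiv ℝ f z 1 + (v.im : ℝ) • fderiv ℝ f z Complex.I := by
    conv_lhs => rw [hv]
    rw [map_add, map_smul, map_smul]
  rw [h1]
  simp only [wD, wDbar, Complex.real_smul]
  have hconj : (starRingEnd ℂ) v = (v.re : ℂ) - (v.im : ℂ) * Complex.I := by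
    rw [Complex.ext_iff]; simp
  conv_rhs => rw [hconj, ← Complex.re_add_im v]
  ring_nf
  simp [Complex.I_sq]
  ring

lemma wD_comp (f g : ℂ → ℂ) (z : ℂ) (hf : DifferentiableAt ℝ f (g z))
    (hg : DifferentiableAt ℝ g z) :
    wD (fun w => f (g w)) z
      = wD f (g z) * wD g z + wDbar f (g z) * (starRingEnd ℂ) (wDbar g z) := by
  have hc : fderiv ℝ (f ∘ g) z = (fderiv ℝ f (g z)).comp (fderiv ℝ g z) :=
    fderiv_comp z hf hg
  have h1 : fderiv ℝ (fun w => f (g w)) z 1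
      = wD f (g z) * fderiv ℝ g z 1 + wDbar f (g z) * (starRingEnd ℂ) (fderiv ℝ g z 1) := by
    show fderiv ℝ (f ∘ g) z 1 = _
    rw [hc]; exact wd_decomp f (g z) _
  have h2 : fderiv ℝ (fun w => f (g w)) z Complex.I
      = wD f (g z) * fderiv ℝ g z Complex.I
        + wDbar f (g z) * (starRingEnd ℂ) (fderiv ℝ g z Complex.I) := by
    show fderiv ℝ (f ∘ g) z Complex.I = _
    rw [hc]; exact wd_decomp f (g z) _
  simp only [wD, wDbar, h1, h2, map_add, map_sub, map_mul, map_div₀, map_one, map_ofNat, Complex.conj_I]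
  ring

lemma wDbar_comp (f g : ℂ → ℂ) (z : ℂ) (hf : DifferentiableAt ℝ f (g z))
    (hg : DifferentiableAt ℝ g z) :
    wDbar (fun w => f (g w)) z
      = wD f (g z) * wDbar g z + wDbar f (g z) * (starRingEnd ℂ) (wD g z) := by
  have hc : fderiv ℝ (f ∘ g) z = (fderiv ℝ f (g z)).comp (fderiv ℝ g z) :=
    fderiv_comp z hf hg
  have h1 : fderiv ℝ (fun w => f (g w)) z 1
      = wD f (g z) * fderiv ℝ g z 1 + wDbar f (g z) * (starRingEnd ℂ) (fderiv ℝ g z 1) := by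
    show fderiv ℝ (f ∘ g) z 1 = _
    rw [hc]; exact wd_decomp f (g z) _
  have h2 : fderiv ℝ (fun w => f (g w)) z Complex.I
      = wD f (g z) * fderiv ℝ g z Complex.I
        + wDbar f (g z) * (starRingEnd ℂ) (fderiv ℝ g z Complex.I) := by
    show fderiv ℝ (f ∘ g) z Complex.I = _
    rw [hc]; exact wd_decomp f (g z) _
  simp only [wD, wDbar, h1, h2, map_add, map_sub, map_mul, map_div₀, map_one, map_ofNat, Complex.conj_I]
  ring

lemma wD_mul (f g : ℂ → ℂ) (z : ℂ) (hf : DifferentiableAt ℝ f z)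
    (hg : DifferentiableAt ℝ g z) :
    wD (fun w => f w * g w) z = wD f z * g z + f z * wD g z := by
  have h := fderiv_fun_mul hf hg
  simp only [wD, h, ContinuousLinearMap.add_apply, ContinuousLinearMap.coe_smul',
    Pi.smul_apply, smul_eq_mul]
  ring

lemma wDbar_mul (f g : ℂ → ℂ) (z : ℂ) (hf : DifferentiableAt ℝ f z)
    (hg : DifferentiableAt ℝ g z) :
    wDbar (fun w => f w * g w) z = wDbar f z * g z + f z * wDbar g z := by
  have h := fderiv_fun_mul hf hg
  simp only [wDbar, h, ContinuousLinearMap.add_apply, ContinuousLinearMap.coe_smul',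
    Pi.smul_apply, smul_eq_mul]
  ring

lemma fderiv_conj_comp (f : ℂ → ℂ) (z : ℂ) (hf : DifferentiableAt ℝ f z) :
    fderiv ℝ (fun w => (starRingEnd ℂ) (f w)) z
      = (Complex.conjCLE : ℂ →L[ℝ] ℂ).comp (fderiv ℝ f z) := by
  have hfun : (fun w => (starRingEnd ℂ) (f w)) = (⇑Complex.conjCLE) ∘ f := by
    funext w; simp
  rw [hfun, fderiv_comp z Complex.conjCLE.differentiableAt hf,
    Complex.conjCLE.fderiv]

lemma wD_conj (f : ℂ → ℂ) (z : ℂ) (hf : DifferentiableAt ℝ f z) :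
    wD (fun w => (starRingEnd ℂ) (f w)) z = (starRingEnd ℂ) (wDbar f z) := by
  simp only [wD, wDbar, fderiv_conj_comp f z hf, ContinuousLinearMap.coe_comp',
    Function.comp_apply, ContinuousLinearEquiv.coe_coe, Complex.conjCLE_apply,
    map_add, map_sub, map_mul, map_div₀, map_one, map_ofNat, Complex.conj_I]
  ring

lemma wDbar_conj (f : ℂ → ℂ) (z : ℂ) (hf : DifferentiableAt ℝ f z) :
    wDbar (fun w => (starRingEnd ℂ) (f w)) z = (starRingEnd ℂ) (wD f z) := by
  simp only [wD, wDbar, fderiv_conj_comp f z hf, ContinuousLinearMap.coe_comp',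
    Function.comp_apply, ContinuousLinearEquiv.coe_coe, Complex.conjCLE_apply,
    map_add, map_sub, map_mul, map_div₀, map_one, map_ofNat, Complex.conj_I]
  ring

lemma wD_congr {f g : ℂ → ℂ} {z : ℂ} (h : f =ᶠ[nhds z] g) : wD f z = wD g z := by
  simp only [wD, h.fderiv_eq]

lemma wDbar_congr {f g : ℂ → ℂ} {z : ℂ} (h : f =ᶠ[nhds z] g) : wDbar f z = wDbar g z := by
  simp only [wDbar, h.fderiv_eq]

lemma wD_id (z : ℂ) : wD (fun w => w) z = 1 := by
  simp only [wD, fderiv_id']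
  simp only [ContinuousLinearMap.coe_id', id_eq]
  rw [show Complex.I * Complex.I = -1 from Complex.I_mul_I]; ring

lemma wDbar_id (z : ℂ) : wDbar (fun w => w) z = 0 := by
  simp only [wDbar, fderiv_id']
  simp only [ContinuousLinearMap.coe_id', id_eq]
  rw [show Complex.I * Complex.I = -1 from Complex.I_mul_I]; ring

lemma wD_holo {f : ℂ → ℂ} {z : ℂ} (hf : DifferentiableAt ℂ f z) :
    wD f z = deriv f z ∧ wDbar f z = 0 := by
  have hr : fderiv ℝ f z = (fderiv ℂ f z).restrictScalars ℝ :=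
    (hf.hasFDerivAt.restrictScalars ℝ).fderiv
  have h1 : fderiv ℝ f z 1 = deriv f z := by
    rw [hr]; simp [ContinuousLinearMap.coe_restrictScalars', ← toSpanSingleton_deriv]
  have hI : fderiv ℝ f z Complex.I = Complex.I * deriv f z := by
    rw [hr]
    have : fderiv ℂ f z Complex.I = Complex.I • fderiv ℂ f z 1 := by
      rw [← map_smul]; norm_num
    simp only [ContinuousLinearMap.coe_restrictScalars']
    rw [this]
    have h1' : fderiv ℂ f z 1 = deriv f z := by simp [← toSpanSingleton_deriv]
    rw [h1']; simp [smul_eq_mul]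
  constructor <;> simp [wD, wDbar, h1, hI] <;> rw [show Complex.I * (Complex.I * deriv f z) = (Complex.I*Complex.I) * deriv f z by ring, Complex.I_mul_I] <;> ring

lemma wD_inv {h : ℂ → ℂ} {z : ℂ} (hh : DifferentiableAt ℝ h z) (h0 : h z ≠ 0) :
    wD (fun w => (h w)⁻¹) z = -wD h z / (h z) ^ 2 ∧
      wDbar (fun w => (h w)⁻¹) z = -wDbar h z / (h z) ^ 2 := by
  have hinv : DifferentiableAt ℂ (fun x : ℂ => x⁻¹) (h z) := differentiableAt_inv h0
  have hd := wD_holo hinv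
  have hderiv : deriv (fun x : ℂ => x⁻¹) (h z) = -((h z) ^ 2)⁻¹ := deriv_inv
  constructor
  · rw [wD_comp _ h z (hinv.restrictScalars ℝ) hh, hd.1, hd.2, hderiv]
    simp; ring
  · rw [wDbar_comp _ h z (hinv.restrictScalars ℝ) hh, hd.1, hd.2, hderiv]
    simp; ring

section second
variable {f : ℂ → ℂ} {s : Set ℂ} (hs : IsOpen s) (hf : ContDiffOn ℝ (⊤ : ℕ∞) f s)
  {z : ℂ} (hz : z ∈ s)

include hs hf hz

lemma fderiv_contDiffAt : ContDiffAt ℝ (⊤ : ℕ∞) (fderiv ℝ f) z := by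
  have h := hf.fderiv_of_isOpen hs (m := (⊤ : ℕ∞)) (by norm_num)
  exact h.contDiffAt (hs.mem_nhds hz)

lemma diffAt_fderiv_apply (v : ℂ) :
    DifferentiableAt ℝ (fun w => fderiv ℝ f w v) z := by
  have h := (fderiv_contDiffAt hs hf hz).differentiableAt (by norm_num)
  exact h.clm_apply (differentiableAt_const v)

lemma wD_diffAt : DifferentiableAt ℝ (wD f) z := by
  have h1 := diffAt_fderiv_apply hs hf hz 1
  have hI := diffAt_fderiv_apply hs hf hz Complex.I
  exact ((h1.sub (hI.const_mul Complex.I)).const_mul (1/2) : )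

lemma wDbar_diffAt : DifferentiableAt ℝ (wDbar f) z := by
  have h1 := diffAt_fderiv_apply hs hf hz 1
  have hI := diffAt_fderiv_apply hs hf hz Complex.I
  exact ((h1.add (hI.const_mul Complex.I)).const_mul (1/2) : )

lemma fderiv_fderiv_apply (v u : ℂ) :
    fderiv ℝ (fun w => fderiv ℝ f w v) z u = fderiv ℝ (fderiv ℝ f) z u v := by
  have hF := (fderiv_contDiffAt hs hf hz).differentiableAt (n := (⊤:ℕ∞)) (by norm_num)
  rw [fderiv_clm_apply hF (differentiableAt_const v)]
  simp

lemma wD_wDbar_symm : wD (wDbar f) z = wDbar (wD f) z := by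
  have hsymm : IsSymmSndFDerivAt ℝ f z :=
    (hf.contDiffAt (hs.mem_nhds hz)).isSymmSndFDerivAt (by simp [minSmoothness_of_isRCLikeNormedField]; exact WithTop.coe_le_coe.mpr (le_top : (2:ℕ∞) ≤ ⊤))
  have h1 := diffAt_fderiv_apply hs hf hz 1
  have hI := diffAt_fderiv_apply hs hf hz Complex.I
  have key : ∀ u : ℂ, fderiv ℝ (wDbar f) z u
      = (1/2) * (fderiv ℝ (fderiv ℝ f) z u 1 + Complex.I * fderiv ℝ (fderiv ℝ f) z u Complex.I) := by
    intro u
    have : wDbar f = fun w => (1/2 : ℂ) * ((fun w => fderiv ℝ f w 1) w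
        + Complex.I * (fun w => fderiv ℝ f w Complex.I) w) := rfl
    rw [this, fderiv_const_mul (by exact h1.add (hI.const_mul Complex.I)),
      fderiv_fun_add h1 (hI.const_mul Complex.I), fderiv_const_mul hI]
    simp [fderiv_fderiv_apply hs hf hz]; try ring
  have keyD : ∀ u : ℂ, fderiv ℝ (wD f) z u
      = (1/2) * (fderiv ℝ (fderiv ℝ f) z u 1 - Complex.I * fderiv ℝ (fderiv ℝ f) z u Complex.I) := by
    intro u
    have : wD f = fun w => (1/2 : ℂ) * ((fun w => fderiv ℝ f w 1) w
        - Complex.I * (fun w => fderiv ℝ f w Complex.I) w) := rfl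
    rw [this, fderiv_const_mul (by exact h1.sub (hI.const_mul Complex.I)),
      fderiv_fun_sub h1 (hI.const_mul Complex.I), fderiv_const_mul hI]
    simp [fderiv_fderiv_apply hs hf hz]; try ring
  simp only [wD, wDbar, key, keyD]
  rw [hsymm 1 Complex.I]
  ring

end second

/-- closed form of the conjugated operator `(Φ)_* ∂ (Φ)_*⁻¹` on
coefficients of `(0,1)`-forms: with `β(w) = α(Ψ w) / conj(∂Φ(Ψ w))` one has
`[∂β](Φ z) · ∂Φ z · conj(∂Φ z) = (1/(1-|λ z|²)) · (∂α z − ∂̄(conj(λ)·α) z)`. -/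
theorem conjugated_d_on_forms_closed_form
    (lam Φ Ψ : ℂ → ℂ)
    (hlam_smooth : ContDiffOn ℝ (⊤ : ℕ∞) lam UHP)
    (hlam_lt : ∀ z ∈ UHP, ‖lam z‖ < 1)
    (hΦ_smooth : ContDiffOn ℝ (⊤ : ℕ∞) Φ UHP)
    (hΨ_smooth : ContDiffOn ℝ (⊤ : ℕ∞) Ψ UHP)
    (hΦ_maps : Set.MapsTo Φ UHP UHP)
    (hΨ_maps : Set.MapsTo Ψ UHP UHP)
    (hleft : ∀ z ∈ UHP, Ψ (Φ z) = z)
    (hright : ∀ w ∈ UHP, Φ (Ψ w) = w)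
    (hBeltrami : ∀ z ∈ UHP, wDbar Φ z = lam z * wD Φ z)
    (hne : ∀ z ∈ UHP, wD Φ z ≠ 0)
    (α : ℂ → ℂ) (hα_smooth : ContDiffOn ℝ (⊤ : ℕ∞) α UHP) :
    ∀ z ∈ UHP,
      wD (fun w => α (Ψ w) / (starRingEnd ℂ) (wD Φ (Ψ w))) (Φ z)
          * wD Φ z * (starRingEnd ℂ) (wD Φ z)
        = (1 / (1 - (‖lam z‖ : ℂ) ^ 2))
            * (wD α z - wDbar (fun x => (starRingEnd ℂ) (lam x) * α x) z) := by
  intro z hz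
  have hUopen : IsOpen UHP := isOpen_lt continuous_const Complex.continuous_im
  have dAt : ∀ {f : ℂ → ℂ}, ContDiffOn ℝ (⊤:ℕ∞) f UHP → ∀ {x : ℂ}, x ∈ UHP →
      DifferentiableAt ℝ f x := by
    intro f hf x hx
    exact (hf.contDiffAt (hUopen.mem_nhds hx)).differentiableAt (by decide)
  have hw₀ : Φ z ∈ UHP := hΦ_maps hz
  have hΨΦ : Ψ (Φ z) = z := hleft z hz
  have hΦd : DifferentiableAt ℝ Φ z := dAt hΦ_smooth hz
  have hΨd : DifferentiableAt ℝ Ψ (Φ z) := dAt hΨ_smooth hw₀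
  have hαd : DifferentiableAt ℝ α z := dAt hα_smooth hz
  have hlamd : DifferentiableAt ℝ lam z := dAt hlam_smooth hz
  have hwDΦd : DifferentiableAt ℝ (wD Φ) z := wD_diffAt hUopen hΦ_smooth hz
  -- composite differentiability
  have hαΨd : DifferentiableAt ℝ (fun w => α (Ψ w)) (Φ z) := by
    have h := DifferentiableAt.comp (Φ z) (show DifferentiableAt ℝ α (Ψ (Φ z)) by
      rw [hΨΦ]; exact hαd) hΨd
    simpa [Function.comp_def] using h
  have hG : DifferentiableAt ℝ (fun w => wD Φ (Ψ w)) (Φ z) := by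
    have h := DifferentiableAt.comp (Φ z) (show DifferentiableAt ℝ (wD Φ) (Ψ (Φ z)) by
      rw [hΨΦ]; exact hwDΦd) hΨd
    simpa [Function.comp_def] using h
  have hh : DifferentiableAt ℝ (fun w => (starRingEnd ℂ) (wD Φ (Ψ w))) (Φ z) := by
    have h := DifferentiableAt.comp (Φ z) (Complex.conjCLE.differentiableAt
      (x := wD Φ (Ψ (Φ z)))) hG
    simpa [Function.comp_def, Complex.conjCLE_apply] using h
  have hhne : (starRingEnd ℂ) (wD Φ (Ψ (Φ z))) ≠ 0 := by
    rw [hΨΦ]; simpa using hne z hz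
  have hinvd : DifferentiableAt ℝ (fun w => ((starRingEnd ℂ) (wD Φ (Ψ w)))⁻¹) (Φ z) := by
    have h := DifferentiableAt.comp (Φ z)
      ((differentiableAt_inv (𝕜 := ℂ) hhne).restrictScalars ℝ) hh
    simpa [Function.comp_def] using h
  -- step equalities
  have S1 : wD (fun w => α (Ψ w) / (starRingEnd ℂ) (wD Φ (Ψ w))) (Φ z)
      = wD (fun w => α (Ψ w)) (Φ z) * ((starRingEnd ℂ) (wD Φ (Ψ (Φ z))))⁻¹
        + α (Ψ (Φ z)) * wD (fun w => ((starRingEnd ℂ) (wD Φ (Ψ w)))⁻¹) (Φ z) := by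
    have hfun : (fun w => α (Ψ w) / (starRingEnd ℂ) (wD Φ (Ψ w)))
        = fun w => α (Ψ w) * ((starRingEnd ℂ) (wD Φ (Ψ w)))⁻¹ := by
      funext w; rw [div_eq_mul_inv]
    rw [hfun]
    exact wD_mul _ _ _ hαΨd hinvd
  have S2 : wD (fun w => α (Ψ w)) (Φ z)
      = wD α z * wD Ψ (Φ z) + wDbar α z * (starRingEnd ℂ) (wDbar Ψ (Φ z)) := by
    have h := wD_comp α Ψ (Φ z) (by rw [hΨΦ]; exact hαd) hΨd
    rw [hΨΦ] at h; exact h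
  have S3 : wD (fun w => ((starRingEnd ℂ) (wD Φ (Ψ w)))⁻¹) (Φ z)
      = -wD (fun w => (starRingEnd ℂ) (wD Φ (Ψ w))) (Φ z)
        / ((starRingEnd ℂ) (wD Φ (Ψ (Φ z)))) ^ 2 := (wD_inv hh hhne).1
  have S4 : wD (fun w => (starRingEnd ℂ) (wD Φ (Ψ w))) (Φ z)
      = (starRingEnd ℂ) (wDbar (fun w => wD Φ (Ψ w)) (Φ z)) := wD_conj _ _ hG
  have S5 : wDbar (fun w => wD Φ (Ψ w)) (Φ z)
      = wD (wD Φ) z * wDbar Ψ (Φ z) + wDbar (wD Φ) z * (starRingEnd ℂ) (wD Ψ (Φ z)) := by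
    have h := wDbar_comp (wD Φ) Ψ (Φ z) (by rw [hΨΦ]; exact hwDΦd) hΨd
    rw [hΨΦ] at h; exact h
  have hcld : DifferentiableAt ℝ (fun x => (starRingEnd ℂ) (lam x)) z := by
    have h := DifferentiableAt.comp z (Complex.conjCLE.differentiableAt (x := lam z)) hlamd
    simpa [Function.comp_def, Complex.conjCLE_apply] using h
  have S6 : wDbar (fun x => (starRingEnd ℂ) (lam x) * α x) z
      = (starRingEnd ℂ) (wD lam z) * α z + (starRingEnd ℂ) (lam z) * wDbar α z := by
    rw [wDbar_mul _ _ _ hcld hαd, wDbar_conj lam z hlamd]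
  -- Beltrami and its derivative
  have hB : wDbar Φ z = lam z * wD Φ z := hBeltrami z hz
  have hbel_ev : wDbar Φ =ᶠ[nhds z] (fun w => lam w * wD Φ w) :=
    Filter.eventuallyEq_of_mem (hUopen.mem_nhds hz) (fun x hx => hBeltrami x hx)
  have F3 : wDbar (wD Φ) z = wD lam z * wD Φ z + lam z * wD (wD Φ) z := by
    rw [← wD_wDbar_symm hUopen hΦ_smooth hz, wD_congr hbel_ev,
      wD_mul lam (wD Φ) z hlamd hwDΦd]
  -- identities from Ψ ∘ Φ = id
  have hev : (fun w => Ψ (Φ w)) =ᶠ[nhds z] (fun w => w) :=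
    Filter.eventuallyEq_of_mem (hUopen.mem_nhds hz) (fun x hx => hleft x hx)
  have F1 : wD Ψ (Φ z) * wD Φ z
      + wDbar Ψ (Φ z) * (starRingEnd ℂ) (wDbar Φ z) = 1 := by
    rw [← wD_comp Ψ Φ z hΨd hΦd, wD_congr hev, wD_id]
  have F2 : wD Ψ (Φ z) * wDbar Φ z
      + wDbar Ψ (Φ z) * (starRingEnd ℂ) (wD Φ z) = 0 := by
    rw [← wDbar_comp Ψ Φ z hΨd hΦd, wDbar_congr hev, wDbar_id]
  rw [hB, map_mul] at F1
  rw [hB] at F2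
  -- nonvanishing
  have hpne : wD Φ z ≠ 0 := hne z hz
  have hpcne : (starRingEnd ℂ) (wD Φ z) ≠ 0 := by simpa using hpne
  have hDpos : (0:ℝ) < 1 - Complex.normSq (lam z) := by
    have h1 := hlam_lt z hz
    have h2 : Complex.normSq (lam z) < 1 := by
      rw [← Complex.sq_norm]; nlinarith [norm_nonneg (lam z)]
    linarith
  have hDne : (1 : ℂ) - lam z * (starRingEnd ℂ) (lam z) ≠ 0 := by
    rw [Complex.mul_conj, ← Complex.ofReal_one, ← Complex.ofReal_sub]
    exact Complex.ofReal_ne_zero.mpr (ne_of_gt hDpos)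
  have hDcne : (1 : ℂ) - (starRingEnd ℂ) (lam z) * lam z ≠ 0 := by
    rw [mul_comm]; exact hDne
  -- solve for the derivatives of Ψ
  have hA : wD Ψ (Φ z) * (wD Φ z * (1 - lam z * (starRingEnd ℂ) (lam z))) = 1 := by
    linear_combination F1 - (starRingEnd ℂ) (lam z) * F2
  have hB2 : wDbar Ψ (Φ z)
      * ((starRingEnd ℂ) (wD Φ z) * (1 - lam z * (starRingEnd ℂ) (lam z))) = -lam z := by
    linear_combination (1 - lam z * (starRingEnd ℂ) (lam z)) * F2 - lam z * hA
  have haval : wD Ψ (Φ z) = 1 / (wD Φ z * (1 - lam z * (starRingEnd ℂ) (lam z))) := by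
    field_simp
    linear_combination hA
  have hbval : wDbar Ψ (Φ z)
      = -lam z / ((starRingEnd ℂ) (wD Φ z) * (1 - lam z * (starRingEnd ℂ) (lam z))) := by
    field_simp
    linear_combination hB2
  have hacval : (starRingEnd ℂ) (wD Ψ (Φ z))
      = 1 / ((starRingEnd ℂ) (wD Φ z) * (1 - (starRingEnd ℂ) (lam z) * lam z)) := by
    have h := congrArg (starRingEnd ℂ) haval
    simpa [map_mul, map_sub, map_one, map_div₀] using h
  have hbcval : (starRingEnd ℂ) (wDbar Ψ (Φ z))
      = -(starRingEnd ℂ) (lam z) / (wD Φ z * (1 - (starRingEnd ℂ) (lam z) * lam z)) := by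
    have h := congrArg (starRingEnd ℂ) hbval
    simpa [map_mul, map_sub, map_one, map_div₀, map_neg] using h
  -- |lam z|^2 = lam z * conj (lam z)
  have habs : ((‖lam z‖ : ℝ) : ℂ) ^ 2 = lam z * (starRingEnd ℂ) (lam z) := by
    rw [← Complex.ofReal_pow, Complex.sq_norm, Complex.mul_conj]
  -- key simplifications
  have hba : wDbar Ψ (Φ z) = -lam z * (starRingEnd ℂ) (wD Ψ (Φ z)) := by
    rw [hbval, hacval, show (1:ℂ) - (starRingEnd ℂ) (lam z) * lam z
      = 1 - lam z * (starRingEnd ℂ) (lam z) by ring]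
    ring
  have hcb : (starRingEnd ℂ) (wDbar Ψ (Φ z))
      = -(starRingEnd ℂ) (lam z) * wD Ψ (Φ z) := by
    have h := congrArg (starRingEnd ℂ) hba
    simpa [map_mul, map_neg, Complex.conj_conj] using h
  have hK : wD (wD Φ) z * wDbar Ψ (Φ z)
        + wDbar (wD Φ) z * (starRingEnd ℂ) (wD Ψ (Φ z))
      = wD lam z * wD Φ z * (starRingEnd ℂ) (wD Ψ (Φ z)) := by
    rw [F3, hba]; ring
  -- assemble
  rw [S1, S2, S3, S4, S5, S6, hΨΦ, hK, hcb]
  simp only [map_mul, Complex.conj_conj]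
  rw [haval, habs]
  field_simp
  ring
end

section
/- (Kodaira–Spencer coboundary identity from Lemma 3.1.) Let Υ : D × ℍ → GL(n,ℂ) be a smooth map, where D is an open neighborhood of 0 in ℝ. Then for every z ∈ ℍ one has ∂̄_z[(∂_t Υ)(0,z) · Υ(0,z)⁻¹] = Υ(0,z) · [∂_t|_{t=0} (Υ(t,z)⁻¹ · ∂̄_z Υ(t,z))] · Υ(0,z)⁻¹, where ∂̄_z denotes the Wirtinger z̄-derivative in the ℍ-variable (entrywise) and ∂_t the derivative in the parameter t. -/
open Complex

/-- Entrywise Wirtinger derivative ∂ of a matrix-valued function. -/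
noncomputable def mwD (n : ℕ) (f : ℂ → Matrix (Fin n) (Fin n) ℂ) (z : ℂ) :
    Matrix (Fin n) (Fin n) ℂ :=
  Matrix.of fun i j => wD (fun w => f w i j) z

/-- Entrywise Wirtinger derivative ∂̄ of a matrix-valued function. -/
noncomputable def mwDbar (n : ℕ) (f : ℂ → Matrix (Fin n) (Fin n) ℂ) (z : ℂ) :
    Matrix (Fin n) (Fin n) ℂ :=
  Matrix.of fun i j => wDbar (fun w => f w i j) z

/-- Entrywise smoothness (C^∞ over ℝ) of a matrix-valued function on a set. -/
def MSmoothOn (n : ℕ) (f : ℂ → Matrix (Fin n) (Fin n) ℂ) (s : Set ℂ) : Prop :=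
  ∀ i j, ContDiffOn ℝ (⊤ : ℕ∞) (fun z => f z i j) s

/-- Entrywise derivative at `t = 0` of a one-parameter family of matrices. -/
noncomputable def mderiv0 (n : ℕ) (f : ℝ → Matrix (Fin n) (Fin n) ℂ) :
    Matrix (Fin n) (Fin n) ℂ :=
  Matrix.of fun i j => deriv (fun t => f t i j) 0

/-- Joint entrywise smoothness (C^∞ over ℝ) of a one-parameter family of
matrix-valued functions on `D × s`. -/
def MSmoothOn2 (n : ℕ) (f : ℝ → ℂ → Matrix (Fin n) (Fin n) ℂ)
    (D : Set ℝ) (s : Set ℂ) : Prop :=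
  ∀ i j, ContDiffOn ℝ (⊤ : ℕ∞) (fun p : ℝ × ℂ => f p.1 p.2 i j) (D ×ˢ s)

section KSAux

attribute [local instance] Matrix.linftyOpNormedAddCommGroup Matrix.linftyOpNormedRing
  Matrix.linftyOpNormedAlgebra

variable {n : ℕ}

/-- The joint map `(t, w) ↦ Υ t w`. -/
def Gmap (n : ℕ) (Υ : ℝ → ℂ → Matrix (Fin n) (Fin n) ℂ) : ℝ × ℂ → Matrix (Fin n) (Fin n) ℂ :=
  fun p => Υ p.1 p.2

/-- Entry evaluation as a continuous `ℝ`-linear map. -/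
noncomputable def entryCLM (n : ℕ) (i j : Fin n) : Matrix (Fin n) (Fin n) ℂ →L[ℝ] ℂ :=
  LinearMap.toContinuousLinearMap
    { toFun := fun m => m i j
      map_add' := fun _ _ => rfl
      map_smul' := fun _ _ => rfl }

@[simp] lemma entryCLM_apply (i j : Fin n) (m : Matrix (Fin n) (Fin n) ℂ) :
    entryCLM n i j m = m i j := rfl

lemma mwDbar_eq_of_hasFDerivAt {f : ℂ → Matrix (Fin n) (Fin n) ℂ}
    {L : ℂ →L[ℝ] Matrix (Fin n) (Fin n) ℂ} {z : ℂ} (hf : HasFDerivAt f L z) :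
    mwDbar n f z = (2⁻¹ : ℂ) • (L 1 + Complex.I • L Complex.I) := by
  ext i j
  have h1 : HasFDerivAt (fun w => f w i j) ((entryCLM n i j).comp L) z :=
    (entryCLM n i j).hasFDerivAt.comp z hf
  simp only [mwDbar, Matrix.of_apply, wDbar, h1.fderiv, ContinuousLinearMap.coe_comp',
    Function.comp_apply, entryCLM_apply, Matrix.smul_apply, Matrix.add_apply, smul_eq_mul]
  ring

lemma mderiv0_eq_of_hasDerivAt {f : ℝ → Matrix (Fin n) (Fin n) ℂ}
    {m : Matrix (Fin n) (Fin n) ℂ} (hf : HasDerivAt f m 0) :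
    mderiv0 n f = m := by
  ext i j
  have h1 : HasDerivAt (fun t => f t i j) (m i j) 0 := by
    exact (entryCLM n i j).hasFDerivAt.comp_hasDerivAt 0 hf
  simp [mderiv0, h1.deriv]

lemma mwDbar_congr {f g : ℂ → Matrix (Fin n) (Fin n) ℂ} {z : ℂ}
    (h : f =ᶠ[nhds z] g) : mwDbar n f z = mwDbar n g z := by
  ext i j
  have h' : (fun w => f w i j) =ᶠ[nhds z] fun w => g w i j := h.mono fun w hw => by simp only [hw]
  simp only [mwDbar, Matrix.of_apply, wDbar, h'.fderiv_eq]

lemma mderiv0_congr {f g : ℝ → Matrix (Fin n) (Fin n) ℂ}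
    (h : f =ᶠ[nhds 0] g) : mderiv0 n f = mderiv0 n g := by
  ext i j
  have h' : (fun t => f t i j) =ᶠ[nhds 0] fun t => g t i j := h.mono fun t ht => by simp only [ht]
  simp only [mderiv0, Matrix.of_apply, h'.deriv_eq]

/-- Joint smoothness of the matrix-valued map from entrywise smoothness. -/
lemma contDiffOn_Gmap {Υ : ℝ → ℂ → Matrix (Fin n) (Fin n) ℂ} {D : Set ℝ} {s : Set ℂ}
    (h : MSmoothOn2 n Υ D s) : ContDiffOn ℝ (⊤ : ℕ∞) (Gmap n Υ) (D ×ˢ s) := by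
  have hg : ContDiffOn ℝ (⊤ : ℕ∞)
      (fun p : ℝ × ℂ => (fun i j => Υ p.1 p.2 i j : Fin n → Fin n → ℂ)) (D ×ˢ s) :=
    contDiffOn_pi.2 fun i => contDiffOn_pi.2 fun j => h i j
  let e : (Fin n → Fin n → ℂ) ≃ₗ[ℝ] Matrix (Fin n) (Fin n) ℂ :=
    { toFun := Matrix.of
      invFun := fun m i j => m i j
      map_add' := fun _ _ => rfl
      map_smul' := fun _ _ => rfl
      left_inv := fun _ => rfl
      right_inv := fun _ => rfl }
  exact (e.toContinuousLinearEquiv.toContinuousLinearMap.contDiff.comp_contDiffOn hg :)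

end KSAux

set_option maxHeartbeats 2000000 in
/-- Kodaira–Spencer coboundary identity: for a smooth family
`Υ : D × ℍ → GL(n,ℂ)`,
`∂̄_z[(∂_tΥ)(0,z)·Υ(0,z)⁻¹] = Υ(0,z)·[∂_t|₀ (Υ(t,z)⁻¹·∂̄_zΥ(t,z))]·Υ(0,z)⁻¹`. -/
theorem kodaira_spencer_coboundary (n : ℕ)
    (D : Set ℝ) (hD : D ∈ nhds (0 : ℝ))
    (Υ : ℝ → ℂ → Matrix (Fin n) (Fin n) ℂ)
    (hΥ_smooth : MSmoothOn2 n Υ D UHP)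
    (hΥ_inv : ∀ t ∈ D, ∀ z ∈ UHP, IsUnit (Υ t z)) :
    ∀ z ∈ UHP,
      mwDbar n (fun w => mderiv0 n (fun t => Υ t w) * (Υ 0 w)⁻¹) z
        = Υ 0 z * mderiv0 n (fun t => (Υ t z)⁻¹ * mwDbar n (Υ t) z) * (Υ 0 z)⁻¹ := by
  letI : NormedRing (Matrix (Fin n) (Fin n) ℂ) := Matrix.linftyOpNormedRing
  letI : NormedAlgebra ℂ (Matrix (Fin n) (Fin n) ℂ) := Matrix.linftyOpNormedAlgebra
  letI : NormedAlgebra ℝ (Matrix (Fin n) (Fin n) ℂ) := Matrix.linftyOpNormedAlgebra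
  letI : TopologicalSpace (Matrix (Fin n) (Fin n) ℂ) := PseudoMetricSpace.toUniformSpace.toTopologicalSpace
  letI : AddCommGroup (Matrix (Fin n) (Fin n) ℂ) := NormedAddCommGroup.toAddCommGroup
  letI : Module ℝ (Matrix (Fin n) (Fin n) ℂ) := NormedSpace.toModule
  have mwDbar_eq_of_hasFDerivAt : ∀ {f : ℂ → Matrix (Fin n) (Fin n) ℂ}
      {L : ℂ →L[ℝ] Matrix (Fin n) (Fin n) ℂ} {z : ℂ} (hf : HasFDerivAt f L z),
      mwDbar n f z = (2⁻¹ : ℂ) • (L 1 + Complex.I • L Complex.I) := by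
    intro f L z hf
    ext i j
    have h1 : HasFDerivAt (fun w => f w i j) ((entryCLM n i j).comp L) z :=
      (entryCLM n i j).hasFDerivAt.comp z hf
    simp only [mwDbar, Matrix.of_apply, wDbar, h1.fderiv, ContinuousLinearMap.coe_comp',
      Function.comp_apply, entryCLM_apply, Matrix.smul_apply, Matrix.add_apply, smul_eq_mul]
    show (1 / 2 : ℂ) * (L 1 i j + I * L I i j) = _
    ring

  intro z hz
  have hUHP : IsOpen UHP := isOpen_lt continuous_const Complex.continuous_im
  have h0Do : (0:ℝ) ∈ interior D := mem_interior_iff_mem_nhds.2 hD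
  have hUo : IsOpen (interior D ×ˢ UHP) := isOpen_interior.prod hUHP
  have hmem : ((0:ℝ), z) ∈ interior D ×ˢ UHP := ⟨h0Do, hz⟩
  have hG : ContDiffOn ℝ (⊤ : ℕ∞) (Gmap n Υ) (interior D ×ˢ UHP) :=
    (contDiffOn_Gmap hΥ_smooth).mono (Set.prod_mono interior_subset subset_rfl)
  have hCAt : ∀ p ∈ interior D ×ˢ UHP, ContDiffAt ℝ (⊤ : ℕ∞) (Gmap n Υ) p :=
    fun p hp => hG.contDiffAt (hUo.mem_nhds hp)
  have hdiffAt : ∀ p ∈ interior D ×ˢ UHP, DifferentiableAt ℝ (Gmap n Υ) p :=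
    fun p hp => (hCAt p hp).differentiableAt (by simp)
  -- second derivative
  have hfd1 :=
    (hCAt _ hmem).fderiv_right (m := 1) (WithTop.coe_le_coe.2 le_top)
  have hS :=
    ((hfd1.differentiableAt one_ne_zero)).hasFDerivAt
  have hsymm : IsSymmSndFDerivAt ℝ (Gmap n Υ) (0, z) :=
    (hCAt _ hmem).isSymmSndFDerivAt (by simp [minSmoothness_of_isRCLikeNormedField]; exact WithTop.coe_le_coe.2 (le_top : (2:ℕ∞) ≤ ⊤))
  -- the unit at (0,z)
  obtain ⟨uA, huA⟩ := hΥ_inv 0 (mem_of_mem_nhds hD) z hz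
  have hAi_eq : Ring.inverse (Gmap n Υ (0, z)) = (↑uA⁻¹ : Matrix (Fin n) (Fin n) ℂ) := by
    have : Gmap n Υ (0, z) = (↑uA : Matrix (Fin n) (Fin n) ℂ) := huA.symm
    rw [this, Ring.inverse_unit]
  have hAAi : Gmap n Υ (0, z) * Ring.inverse (Gmap n Υ (0, z)) = 1 :=
    Ring.mul_inverse_cancel _ ⟨uA, huA⟩
  -- derivative of the injections
  have hJ : ∀ (t : ℝ) (w : ℂ), HasFDerivAt (fun w : ℂ => ((t,w) : ℝ × ℂ))
      (((0 : ℂ →L[ℝ] ℝ)).prod (ContinuousLinearMap.id ℝ ℂ)) w :=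
    fun t w => HasFDerivAt.prodMk (hasFDerivAt_const t w) (hasFDerivAt_id w)
  have hline : ∀ (w : ℂ), HasDerivAt (fun t : ℝ => ((t, w) : ℝ × ℂ)) (1, 0) 0 :=
    fun w => HasDerivAt.prodMk (hasDerivAt_id (0:ℝ)) (hasDerivAt_const (0:ℝ) w)
  -- inverse function derivative at A
  have hinv : HasFDerivAt Ring.inverse
      (-(ContinuousLinearMap.mulLeftRight ℝ _ (Ring.inverse (Gmap n Υ (0, z)))
          (Ring.inverse (Gmap n Υ (0, z))))) (Gmap n Υ (0, z)) := by
    rw [hAi_eq]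
    have : Gmap n Υ (0, z) = (↑uA : Matrix (Fin n) (Fin n) ℂ) := huA.symm
    rw [this]
    exact hasFDerivAt_ringInverse uA
  -- derivative of w ↦ G(0,w)
  have hG0w : HasFDerivAt (fun w => Gmap n Υ (0, w))
      ((fderiv ℝ (Gmap n Υ) (0, z)).comp
        (((0 : ℂ →L[ℝ] ℝ)).prod (ContinuousLinearMap.id ℝ ℂ))) z :=
    (hdiffAt _ hmem).hasFDerivAt.comp z (hJ 0 z)
  -- derivative of w ↦ Ring.inverse (G(0,w))
  have hQ : HasFDerivAt (fun w => Ring.inverse (Gmap n Υ (0, w)))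
      ((-(ContinuousLinearMap.mulLeftRight ℝ _ (Ring.inverse (Gmap n Υ (0, z)))
          (Ring.inverse (Gmap n Υ (0, z))))).comp
        ((fderiv ℝ (Gmap n Υ) (0, z)).comp
          (((0 : ℂ →L[ℝ] ℝ)).prod (ContinuousLinearMap.id ℝ ℂ)))) z :=
    hinv.comp z hG0w
  -- derivative of w ↦ fderiv G (0,w)
  have hfdw : HasFDerivAt (fun w => fderiv ℝ (Gmap n Υ) (0, w))
      ((fderiv ℝ (fderiv ℝ (Gmap n Υ)) (0, z)).comp
        (((0 : ℂ →L[ℝ] ℝ)).prod (ContinuousLinearMap.id ℝ ℂ))) z :=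
    hS.comp z (hJ 0 z)
  have hP := hfdw.clm_apply (hasFDerivAt_const (((1:ℝ), (0:ℂ)) : ℝ × ℂ) z)
  have hprod := hP.mul' hQ
  -- LHS
  have hLHS1 : mwDbar n (fun w => mderiv0 n (fun t => Υ t w) * (Υ 0 w)⁻¹) z
      = mwDbar n (fun w => (fderiv ℝ (Gmap n Υ) (0, w)) ((1:ℝ), (0:ℂ))
          * Ring.inverse (Gmap n Υ (0, w))) z := by
    apply mwDbar_congr
    filter_upwards [hUHP.mem_nhds hz] with w hw
    have hw' : ((0:ℝ), w) ∈ interior D ×ˢ UHP := ⟨h0Do, hw⟩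
    have hduw : HasDerivAt (fun t => Υ t w) ((fderiv ℝ (Gmap n Υ) (0, w)) ((1:ℝ), (0:ℂ))) 0 :=
      by have h := (hdiffAt _ hw').hasFDerivAt.comp_hasDerivAt 0 (hline w); exact h
    rw [mderiv0_eq_of_hasDerivAt hduw,
      (Matrix.nonsing_inv_eq_ringInverse (Υ 0 w) : (Υ 0 w)⁻¹ = Ring.inverse (Gmap n Υ (0, w)))]
    rfl
  -- RHS congruence
  have hRHS1 : mderiv0 n (fun t => (Υ t z)⁻¹ * mwDbar n (Υ t) z)
      = mderiv0 n (fun t => Ring.inverse (Gmap n Υ (t, z)) *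
          ((2⁻¹ : ℂ) • ((fderiv ℝ (Gmap n Υ) (t, z)) ((0:ℝ), (1:ℂ))
            + Complex.I • (fderiv ℝ (Gmap n Υ) (t, z)) ((0:ℝ), Complex.I)))) := by
    apply mderiv0_congr
    filter_upwards [isOpen_interior.mem_nhds h0Do] with t ht
    have ht' : ((t:ℝ), z) ∈ interior D ×ˢ UHP := ⟨ht, hz⟩
    have hGt : HasFDerivAt (Υ t)
        ((fderiv ℝ (Gmap n Υ) (t, z)).comp
          (((0 : ℂ →L[ℝ] ℝ)).prod (ContinuousLinearMap.id ℝ ℂ))) z :=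
      (hdiffAt _ ht').hasFDerivAt.comp z (hJ t z)
    rw [mwDbar_eq_of_hasFDerivAt hGt,
      (Matrix.nonsing_inv_eq_ringInverse (Υ t z) : (Υ t z)⁻¹ = Ring.inverse (Gmap n Υ (t, z)))]
    rfl
  -- derivative in t of the RHS integrand
  have d1 : HasDerivAt (fun t => Gmap n Υ (t, z)) ((fderiv ℝ (Gmap n Υ) (0, z)) (1, 0)) 0 :=
    by have h := (hdiffAt _ hmem).hasFDerivAt.comp_hasDerivAt 0 (hline z); exact h
  have dInv : HasDerivAt (fun t => Ring.inverse (Gmap n Υ (t, z)))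
      ((-(ContinuousLinearMap.mulLeftRight ℝ _ (Ring.inverse (Gmap n Υ (0, z)))
          (Ring.inverse (Gmap n Υ (0, z))))) ((fderiv ℝ (Gmap n Υ) (0, z)) (1, 0))) 0 :=
    by have h := hinv.comp_hasDerivAt 0 d1; exact h
  have dL : HasDerivAt (fun t => fderiv ℝ (Gmap n Υ) (t, z))
      ((fderiv ℝ (fderiv ℝ (Gmap n Υ)) (0, z)) (1, 0)) 0 :=
    by have h := hS.comp_hasDerivAt 0 (hline z); exact h
  have dL1 := dL.clm_apply (hasDerivAt_const (0:ℝ) (((0:ℝ), (1:ℂ)) : ℝ × ℂ))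
  have dLI := dL.clm_apply (hasDerivAt_const (0:ℝ) (((0:ℝ), Complex.I) : ℝ × ℂ))
  have dR := (dL1.add (dLI.const_smul Complex.I)).const_smul (2⁻¹ : ℂ)
  have dprod := dInv.mul dR
  have hRHS2 := mderiv0_eq_of_hasDerivAt (f := fun t => Ring.inverse (Gmap n Υ (t, z)) *
    ((2⁻¹ : ℂ) • ((fderiv ℝ (Gmap n Υ) (t, z)) ((0:ℝ), (1:ℂ))
      + Complex.I • (fderiv ℝ (Gmap n Υ) (t, z)) ((0:ℝ), Complex.I)))) dprod
  rw [hLHS1, mwDbar_eq_of_hasFDerivAt (f := fun w => (fderiv ℝ (Gmap n Υ) (0, w)) ((1:ℝ), (0:ℂ))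
      * Ring.inverse (Gmap n Υ (0, w))) hprod, hRHS1, hRHS2,
    (Matrix.nonsing_inv_eq_ringInverse (Υ 0 z) : (Υ 0 z)⁻¹ = Ring.inverse (Gmap n Υ (0, z))),
    (rfl : Υ 0 z = Gmap n Υ (0, z))]
  simp only [ContinuousLinearMap.add_apply, ContinuousLinearMap.coe_comp', Function.comp_apply,
    ContinuousLinearMap.smul_apply, ContinuousLinearMap.smulRight_apply,
    ContinuousLinearMap.flip_apply, ContinuousLinearMap.neg_apply,
    ContinuousLinearMap.mulLeftRight_apply, ContinuousLinearMap.zero_apply,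
    ContinuousLinearMap.prod_apply, ContinuousLinearMap.coe_zero, Pi.zero_apply,
    ContinuousLinearMap.id_apply, map_zero, smul_eq_mul, Pi.add_apply, Pi.smul_apply]
  have hid : Gmap n Υ (0, z) = Υ 0 z := rfl
  simp only [hid] at hAAi ⊢
  rw [hsymm.eq (((0:ℝ), (1:ℂ))) (((1:ℝ), (0:ℂ))), hsymm.eq (((0:ℝ), Complex.I)) (((1:ℝ), (0:ℂ)))]
  simp only [zero_add, add_zero, mul_neg, neg_mul, mul_add, add_mul, smul_add,
    mul_smul_comm, smul_mul_assoc, smul_smul, ← mul_assoc, hAAi, one_mul, neg_neg, smul_neg, op_smul_eq_mul]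
  module
end
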